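/- (Craig's formula) For every real x ≥ 0, the Gaussian Q-function satisfies Q(x) = (1/π) ∫_0^{π/2} exp( −x² / (2 sin² ϑ) ) dϑ. -/

import Mathlib

open MeasureTheory Real

/-- The Gaussian tail function Q(x) = ∫_x^∞ (1/√(2π)) e^{-t²/2} dt. -/
noncomputable def gaussQ (x : ℝ) : ℝ :=
  ∫ t in Set.Ioi x, (1 / Real.sqrt (2*π)) * Real.exp (-t^2/2)

open Set in
noncomputable def gaussPhi (t : ℝ) : ℝ := (1 / Real.sqrt (2*π)) * Real.exp (-t^2/2)

open Set in
lemma gaussPhi_cont : Continuous gaussPhi := by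
  unfold gaussPhi; fun_prop

open Set in
lemma gaussPhi_integrable : Integrable gaussPhi := by
  have h : Integrable (fun t : ℝ => Real.exp (-(1/2 : ℝ) * t^2)) := integrable_exp_neg_mul_sq (by norm_num)
  have := h.const_mul (1 / Real.sqrt (2*π))
  convert this using 1 with t
  funext t
  rw [gaussPhi]; ring_nf

open Set in
lemma gaussQ0 : (∫ t in Set.Ioi (0:ℝ), gaussPhi t) = 1/2 := by
  have h : ∫ t in Set.Ioi (0:ℝ), Real.exp (-(1/2:ℝ) * t^2) = Real.sqrt (π / (1/2)) / 2 :=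
    integral_gaussian_Ioi (1/2)
  have h2 : ∫ t in Set.Ioi (0:ℝ), gaussPhi t
      = (1 / Real.sqrt (2*π)) * ∫ t in Set.Ioi (0:ℝ), Real.exp (-(1/2:ℝ) * t^2) := by
    rw [← integral_const_mul]
    congr 1 with t
    rw [gaussPhi]; ring_nf
  rw [h2, h]
  have h3 : Real.sqrt (π / (1/2)) = Real.sqrt (2*π) := by norm_num [mul_comm]
  rw [h3]
  have : Real.sqrt (2*π) ≠ 0 := by positivity
  field_simp

open Set in
lemma gaussQ_eq (x : ℝ) (hx : 0 ≤ x) :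
    (∫ t in Set.Ioi x, gaussPhi t) = (1/2 : ℝ) - ∫ t in (0:ℝ)..x, gaussPhi t := by
  have hsplit : (∫ t in Set.Ioc 0 x, gaussPhi t) + (∫ t in Set.Ioi x, gaussPhi t)
      = ∫ t in Set.Ioi (0:ℝ), gaussPhi t := by
    rw [← setIntegral_union]
    · rw [Ioc_union_Ioi_eq_Ioi hx]
    · exact Ioc_disjoint_Ioi le_rfl
    · exact measurableSet_Ioi
    · exact gaussPhi_integrable.integrableOn
    · exact gaussPhi_integrable.integrableOn
  rw [gaussQ0] at hsplit
  rw [intervalIntegral.integral_of_le hx]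
  linarith

open Set in
lemma gaussQ_hasDeriv (x : ℝ) (hx : 0 < x) :
    HasDerivAt (fun y => ∫ t in Set.Ioi y, gaussPhi t) (-(gaussPhi x)) x := by
  have h1 : HasDerivAt (fun y : ℝ => (1/2 : ℝ) - ∫ t in (0:ℝ)..y, gaussPhi t) (-(gaussPhi x)) x := by
    have h2 : HasDerivAt (fun y : ℝ => ∫ t in (0:ℝ)..y, gaussPhi t) (gaussPhi x) x :=
      (gaussPhi_cont.integral_hasStrictDerivAt 0 x).hasDerivAt
    exact ((hasDerivAt_const x (1/2:ℝ)).sub h2).congr_deriv (by simp)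
  apply h1.congr_of_eventuallyEq
  filter_upwards [eventually_gt_nhds hx] with y hy
  exact gaussQ_eq y hy.le

open Set in
lemma cot_image : (fun θ => Real.cos θ / Real.sin θ) '' (Set.Ioo 0 (π/2)) = Set.Ioi (0:ℝ) := by
  ext u
  constructor
  · rintro ⟨θ, ⟨h1, h2⟩, rfl⟩
    have hs : 0 < Real.sin θ := Real.sin_pos_of_pos_of_lt_pi h1 (h2.trans (by linarith [Real.pi_pos]))
    have hc : 0 < Real.cos θ := Real.cos_pos_of_mem_Ioo ⟨by linarith, h2⟩
    exact div_pos hc hs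
  · intro hu
    have hu' : (0:ℝ) < u := hu
    refine ⟨Real.arctan (1/u), ⟨by simpa using Real.arctan_strictMono (show (0:ℝ) < 1/u by positivity), Real.arctan_lt_pi_div_two _⟩, ?_⟩
    have ht : Real.tan (Real.arctan (1/u)) = 1/u := Real.tan_arctan _
    rw [Real.tan_eq_sin_div_cos] at ht
    have hc : 0 < Real.cos (Real.arctan (1/u)) := Real.cos_arctan_pos _
    have hs : 0 < Real.sin (Real.arctan (1/u)) := by
      have := Real.sin_arctan (1/u)
      rw [this]; positivity
    field_simp at ht ⊢
    nlinarith [ht]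

open Set in
lemma cot_injOn : Set.InjOn (fun θ => Real.cos θ / Real.sin θ) (Set.Ioo 0 (π/2)) := by
  rintro a ⟨ha1, ha2⟩ b ⟨hb1, hb2⟩ hab
  have hπ := Real.pi_pos
  have hsa : 0 < Real.sin a := Real.sin_pos_of_pos_of_lt_pi ha1 (ha2.trans (by linarith))
  have hsb : 0 < Real.sin b := Real.sin_pos_of_pos_of_lt_pi hb1 (hb2.trans (by linarith))
  have hca : 0 < Real.cos a := Real.cos_pos_of_mem_Ioo ⟨by linarith, ha2⟩
  have hcb : 0 < Real.cos b := Real.cos_pos_of_mem_Ioo ⟨by linarith, hb2⟩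
  have htan : Real.tan a = Real.tan b := by
    rw [Real.tan_eq_sin_div_cos, Real.tan_eq_sin_div_cos]
    simp only at hab
    field_simp at hab ⊢
    nlinarith [hab]
  exact Real.injOn_tan ⟨by linarith, ha2⟩ ⟨by linarith, hb2⟩ htan

open Set in
lemma cot_hasDeriv (θ : ℝ) (hθ : θ ∈ Set.Ioo 0 (π/2)) :
    HasDerivAt (fun θ => Real.cos θ / Real.sin θ) (-(1 / Real.sin θ ^ 2)) θ := by
  have hs : 0 < Real.sin θ := Real.sin_pos_of_pos_of_lt_pi hθ.1 (hθ.2.trans (by linarith [Real.pi_pos]))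
  have h := (Real.hasDerivAt_cos θ).div (Real.hasDerivAt_sin θ) hs.ne'
  refine h.congr_deriv ?_
  have h2 := Real.sin_sq_add_cos_sq θ
  field_simp
  nlinarith [h2]

open Set in
lemma subst_integral (x : ℝ) (hx : 0 < x) :
    (∫ θ in (0:ℝ)..(π/2), (x / Real.sin θ^2) * Real.exp (-x^2/(2*Real.sin θ^2)))
      = Real.sqrt (π/2) * Real.exp (-x^2/2) := by
  have hπ := Real.pi_pos
  set g : ℝ → ℝ := fun u => x * Real.exp (-x^2*(1+u^2)/2) with hg
  have hchg : ∫ u in Set.Ioi (0:ℝ), g u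
      = ∫ θ in Set.Ioo (0:ℝ) (π/2), |(-(1 / Real.sin θ^2))| • g (Real.cos θ / Real.sin θ) := by
    rw [← cot_image]
    exact integral_image_eq_integral_abs_deriv_smul measurableSet_Ioo
      (fun θ hθ => (cot_hasDeriv θ hθ).hasDerivWithinAt) cot_injOn g
  -- compute left side
  have hleft : ∫ u in Set.Ioi (0:ℝ), g u = Real.sqrt (π/2) * Real.exp (-x^2/2) := by
    have h1 : ∫ u in Set.Ioi (0:ℝ), Real.exp (-(x^2/2) * u^2) = Real.sqrt (π/(x^2/2))/2 :=
      integral_gaussian_Ioi (x^2/2)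
    have h2 : ∫ u in Set.Ioi (0:ℝ), g u
        = (x * Real.exp (-x^2/2)) * ∫ u in Set.Ioi (0:ℝ), Real.exp (-(x^2/2) * u^2) := by
      rw [← integral_const_mul]
      congr 1 with u
      simp only [hg]
      rw [mul_assoc, ← Real.exp_add]
      congr 2
      ring
    rw [h2, h1]
    have h3 : Real.sqrt (π/(x^2/2)) = Real.sqrt (2*π) / x := by
      rw [show π/(x^2/2) = (2*π)/x^2 by ring, Real.sqrt_div (by positivity), Real.sqrt_sq hx.le]
    have h4 : Real.sqrt (π/2) = Real.sqrt (2*π) / 2 := by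
      rw [show π/2 = (2*π)/4 by ring, Real.sqrt_div (by positivity),
        show (4:ℝ) = 2^2 by norm_num, Real.sqrt_sq (by norm_num)]
    rw [h3, h4]
    field_simp
  -- identify right side with the interval integral
  have hright : (∫ θ in (0:ℝ)..(π/2), (x / Real.sin θ^2) * Real.exp (-x^2/(2*Real.sin θ^2)))
      = ∫ θ in Set.Ioo (0:ℝ) (π/2), |(-(1 / Real.sin θ^2))| • g (Real.cos θ / Real.sin θ) := by
    rw [intervalIntegral.integral_of_le (by linarith), MeasureTheory.integral_Ioc_eq_integral_Ioo]
    apply setIntegral_congr_fun measurableSet_Ioo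
    intro θ hθ
    have hs : 0 < Real.sin θ := Real.sin_pos_of_pos_of_lt_pi hθ.1 (hθ.2.trans (by linarith))
    have hkey : 1 + (Real.cos θ / Real.sin θ)^2 = 1 / Real.sin θ^2 := by
      have := Real.sin_sq_add_cos_sq θ
      field_simp
      linarith
    simp only [hg, smul_eq_mul, abs_neg]
    rw [abs_of_pos (by positivity : (0:ℝ) < 1 / Real.sin θ^2), hkey]
    have hsne : Real.sin θ ≠ 0 := hs.ne'
    rw [show -x^2 * (1 / Real.sin θ^2) / 2 = -x^2 / (2 * Real.sin θ^2) by
      field_simp]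
    ring
  rw [hright, ← hchg, hleft]

open Set in
lemma integrand_meas (x : ℝ) :
    AEStronglyMeasurable (fun θ : ℝ => Real.exp (-x^2 / (2 * Real.sin θ^2)))
      (volume.restrict (Set.uIoc 0 (π/2))) := by
  apply Measurable.aestronglyMeasurable
  measurability

open Set in
lemma integrand_intInt (x : ℝ) :
    IntervalIntegrable (fun θ : ℝ => Real.exp (-x^2 / (2 * Real.sin θ^2))) volume 0 (π/2) := by
  apply IntervalIntegrable.mono_fun' (g := fun _ => (1:ℝ)) intervalIntegrable_const (integrand_meas x)
  filter_upwards with θ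
  rw [Real.norm_eq_abs, abs_of_pos (Real.exp_pos _)]
  apply Real.exp_le_one_iff.2
  rcases eq_or_ne (Real.sin θ) 0 with h | h
  · simp [h]
  · have : (0:ℝ) < 2 * Real.sin θ^2 := by positivity
    exact div_nonpos_of_nonpos_of_nonneg (neg_nonpos.2 (sq_nonneg x)) this.le

open Set in
noncomputable def craigF (x : ℝ) : ℝ := ∫ θ in (0:ℝ)..(π/2), Real.exp (-x^2 / (2 * Real.sin θ^2))

open Set in
lemma craigF_hasDeriv (x₀ : ℝ) (hx₀ : 0 < x₀) :
    HasDerivAt craigF (-(Real.sqrt (π/2) * Real.exp (-x₀^2/2))) x₀ := by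
  have hπ := Real.pi_pos
  set F' : ℝ → ℝ → ℝ := fun x θ => (-(x / Real.sin θ^2)) * Real.exp (-x^2 / (2 * Real.sin θ^2))
    with hF'
  have key := intervalIntegral.hasDerivAt_integral_of_dominated_loc_of_deriv_le
    (F := fun x θ => Real.exp (-x^2 / (2 * Real.sin θ^2))) (F' := F') (x₀ := x₀)
    (a := 0) (b := π/2) (μ := volume) (bound := fun _ => 4/x₀)
    (Metric.ball_mem_nhds x₀ (half_pos hx₀))
    (Filter.Eventually.of_forall fun x => integrand_meas x)
    (integrand_intInt x₀)
    ?meas' ?bound ?boundint ?diff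
  case meas' =>
    apply Measurable.aestronglyMeasurable
    measurability
  case bound =>
    filter_upwards with θ hθ x hxball
    rw [Set.uIoc_of_le (by linarith), Set.mem_Ioc] at hθ
    have hs : 0 < Real.sin θ := Real.sin_pos_of_pos_of_lt_pi hθ.1 (hθ.2.trans_lt (by linarith))
    rw [Metric.mem_ball, Real.dist_eq, abs_lt] at hxball
    have hxpos : x₀/2 < x := by linarith
    have hx : 0 < x := by linarith
    have hy : (0:ℝ) ≤ x^2 / (2 * Real.sin θ^2) := by positivity
    have hye : x^2 / (2 * Real.sin θ^2) * Real.exp (-(x^2 / (2 * Real.sin θ^2))) ≤ 1 := by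
      rw [Real.exp_neg, mul_inv_le_iff₀ (Real.exp_pos _), one_mul]
      exact (Real.add_one_le_exp _).trans' (by linarith)
    have hnorm : ‖F' x θ‖ = (2/x) * (x^2 / (2 * Real.sin θ^2) * Real.exp (-(x^2 / (2 * Real.sin θ^2)))) := by
      rw [hF', Real.norm_eq_abs]
      simp only []
      rw [abs_of_nonpos]
      · rw [show -x^2 / (2 * Real.sin θ^2) = -(x^2 / (2 * Real.sin θ^2)) by ring]
        field_simp
      · apply mul_nonpos_of_nonpos_of_nonneg
        · simp only [neg_nonpos]; positivity
        · exact (Real.exp_pos _).le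
    rw [hnorm]
    calc (2/x) * (x^2 / (2 * Real.sin θ^2) * Real.exp (-(x^2 / (2 * Real.sin θ^2))))
        ≤ (2/x) * 1 := by
          apply mul_le_mul_of_nonneg_left hye (by positivity)
      _ ≤ 4/x₀ := by
          rw [mul_one, div_le_div_iff₀ hx hx₀]
          nlinarith
  case boundint => exact intervalIntegrable_const
  case diff =>
    filter_upwards with θ hθ x hxball
    rw [Set.uIoc_of_le (by linarith), Set.mem_Ioc] at hθ
    have hs : 0 < Real.sin θ := Real.sin_pos_of_pos_of_lt_pi hθ.1 (hθ.2.trans_lt (by linarith))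
    have hinner : HasDerivAt (fun x : ℝ => -x^2 / (2 * Real.sin θ^2)) (-(x / Real.sin θ^2)) x := by
      have h1 : HasDerivAt (fun x : ℝ => x^2) (2*x) x := by
        simpa using (hasDerivAt_pow 2 x)
      have h2 := (h1.neg).div_const (2 * Real.sin θ^2)
      refine h2.congr_deriv ?_
      field_simp
    have := (Real.hasDerivAt_exp (-x^2 / (2 * Real.sin θ^2))).comp x hinner
    refine this.congr_deriv ?_
    rw [hF']
    simp only []
    ring
  have hval : (∫ θ in (0:ℝ)..(π/2), F' x₀ θ) = -(Real.sqrt (π/2) * Real.exp (-x₀^2/2)) := by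
    rw [← subst_integral x₀ hx₀, ← intervalIntegral.integral_neg]
    congr 1 with θ
    rw [hF']
    simp only []
    ring
  rw [← hval]
  exact key.2

open Set in
lemma craigF_nonneg (y : ℝ) : 0 ≤ craigF y := by
  have hπ := Real.pi_pos
  apply intervalIntegral.integral_nonneg (by linarith)
  intro θ _
  exact (Real.exp_pos _).le

open Set in
lemma craigF_le (y : ℝ) : craigF y ≤ (π/2) * Real.exp (-y^2/2) := by
  have hπ := Real.pi_pos
  have h1 : craigF y = ∫ θ in Set.Ioc (0:ℝ) (π/2), Real.exp (-y^2 / (2 * Real.sin θ^2)) := by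
    rw [craigF, intervalIntegral.integral_of_le (by linarith)]
  have h2 : (∫ θ in Set.Ioc (0:ℝ) (π/2), Real.exp (-y^2/2))
      = (π/2) * Real.exp (-y^2/2) := by
    rw [setIntegral_const, measureReal_def, Real.volume_Ioc, smul_eq_mul]
    congr 1
    rw [ENNReal.toReal_ofReal (by linarith)]
    ring
  rw [h1, ← h2]
  apply setIntegral_mono_on
  · rw [← intervalIntegrable_iff_integrableOn_Ioc_of_le (by linarith)]
    exact integrand_intInt y
  · exact integrableOn_const (by rw [Real.volume_Ioc]; exact ENNReal.ofReal_ne_top)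
  · exact measurableSet_Ioc
  · intro θ hθ
    have hs : 0 < Real.sin θ := Real.sin_pos_of_pos_of_lt_pi hθ.1 (hθ.2.trans_lt (by linarith))
    apply Real.exp_le_exp.2
    rw [div_le_div_iff₀ (by positivity) (by norm_num)]
    have hsin1 : Real.sin θ^2 ≤ 1 := by nlinarith [Real.sin_le_one θ]
    nlinarith [mul_nonneg (sq_nonneg y) (sub_nonneg.2 hsin1)]

open Set in
lemma craigF_tendsto : Filter.Tendsto craigF Filter.atTop (nhds 0) := by
  apply squeeze_zero craigF_nonneg craigF_le
  rw [show (0:ℝ) = (π/2) * 0 by ring]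
  apply Filter.Tendsto.const_mul
  apply Real.tendsto_exp_atBot.comp
  have h1 : Filter.Tendsto (fun y : ℝ => y^2) Filter.atTop Filter.atTop :=
    Filter.tendsto_pow_atTop two_ne_zero
  have h2 : Filter.Tendsto (fun y : ℝ => -y^2) Filter.atTop Filter.atBot :=
    Filter.tendsto_neg_atTop_atBot.comp h1
  exact h2.atBot_div_const (by norm_num)

open Set in
lemma sqrt_pi_half : π * (1 / Real.sqrt (2*π)) = Real.sqrt (π/2) := by
  have hπ := Real.pi_pos
  have h : Real.sqrt (π/2) * Real.sqrt (2*π) = π := by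
    rw [← Real.sqrt_mul (by positivity), show π/2*(2*π) = π^2 by ring, Real.sqrt_sq hπ.le]
  have hs : (0:ℝ) < Real.sqrt (2*π) := Real.sqrt_pos.2 (by positivity)
  rw [mul_one_div, div_eq_iff hs.ne']
  exact h.symm


/-- Craig's formula: Q(x) = (1/π) ∫_0^{π/2} exp(-x²/(2 sin²ϑ)) dϑ for x ≥ 0. -/
theorem craig_formula (x : ℝ) (hx : 0 ≤ x) :
    gaussQ x = (1/π) * ∫ ϑ in (0:ℝ)..(π/2), Real.exp (-x^2 / (2 * Real.sin ϑ ^ 2)) := by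
  have hπ := Real.pi_pos
  have hQ : gaussQ = fun y => ∫ t in Set.Ioi y, gaussPhi t := rfl
  have hCF : (∫ ϑ in (0:ℝ)..(π/2), Real.exp (-x^2 / (2 * Real.sin ϑ ^ 2))) = craigF x := rfl
  rw [hCF]
  rcases hx.eq_or_lt with rfl | hx0
  · -- x = 0
    have hF0 : craigF 0 = π/2 := by
      rw [craigF]
      have : ∀ θ : ℝ, Real.exp (-(0:ℝ)^2 / (2 * Real.sin θ^2)) = 1 := by
        intro θ; norm_num
      simp only [this, intervalIntegral.integral_const, smul_eq_mul, mul_one, sub_zero]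
    rw [hQ, hF0]
    show (∫ t in Set.Ioi (0:ℝ), gaussPhi t) = 1/π * (π/2)
    rw [gaussQ0]
    field_simp
  · -- x > 0
    set h : ℝ → ℝ := fun y => π * gaussQ y - craigF y with hh
    have hderiv : ∀ y : ℝ, 0 < y → HasDerivAt h 0 y := by
      intro y hy
      have h1 : HasDerivAt gaussQ (-(gaussPhi y)) y := by
        rw [hQ]; exact gaussQ_hasDeriv y hy
      have h2 := craigF_hasDeriv y hy
      have h3 := ((h1.const_mul π).sub h2)
      refine h3.congr_deriv ?_
      rw [mul_neg, gaussPhi, ← mul_assoc, sqrt_pi_half]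
      ring
    have hconst : ∀ y : ℝ, x ≤ y → h y = h x := by
      intro y hy
      have := constant_of_has_deriv_right_zero (f := h) (a := x) (b := y)
        (fun z hz => ((hderiv z (lt_of_lt_of_le hx0 hz.1)).continuousAt).continuousWithinAt)
        (fun z hz => (hderiv z (lt_of_lt_of_le hx0 hz.1)).hasDerivWithinAt)
      exact this y ⟨hy, le_rfl⟩
    have htend0 : Filter.Tendsto h Filter.atTop (nhds 0) := by
      have hQt : Filter.Tendsto gaussQ Filter.atTop (nhds 0) := by
        have ht : Filter.Tendsto (fun y : ℝ => ∫ t in (0:ℝ)..y, gaussPhi t) Filter.atTop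
            (nhds (∫ t in Set.Ioi (0:ℝ), gaussPhi t)) :=
          intervalIntegral_tendsto_integral_Ioi 0 gaussPhi_integrable.integrableOn
            Filter.tendsto_id
        rw [gaussQ0] at ht
        have ht2 : Filter.Tendsto (fun y : ℝ => (1/2 : ℝ) - ∫ t in (0:ℝ)..y, gaussPhi t)
            Filter.atTop (nhds 0) := by
          have := (tendsto_const_nhds (x := (1/2:ℝ)) (f := Filter.atTop)).sub ht
          simpa using this
        apply ht2.congr'
        filter_upwards [Filter.eventually_ge_atTop (0:ℝ)] with y hy
        rw [hQ]
        exact (gaussQ_eq y hy).symm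
      have := (hQt.const_mul π).sub craigF_tendsto
      simpa using this
    have hx_tend : Filter.Tendsto h Filter.atTop (nhds (h x)) := by
      apply Filter.Tendsto.congr' _ tendsto_const_nhds
      filter_upwards [Filter.eventually_ge_atTop x] with y hy
      exact (hconst y hy).symm
    have hhx : h x = 0 := tendsto_nhds_unique hx_tend htend0
    have : π * gaussQ x = craigF x := by simp only [hh] at hhx; linarith
    rw [← this]
    field_simp
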